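/- Let R be a commutative ring and M a finite free R-module of rank n. Let Ψ : M → M* = Hom_R(M, R) be an R-module isomorphism, and let M₁ ⊆ M₂ ⊆ M be submodules such that M₁ is free of rank A, M₂/M₁ is free of rank n−2A, M/M₂ is free of rank A, and M/M₁ is free, and such that M₁ and M₂ are perpendicular under Ψ, i.e. Ψ(m₁)(m₂) = 0 and Ψ(m₂)(m₁) = 0 for all m₁ ∈ M₁ and m₂ ∈ M₂. Then the map Ψ̄ : M₂/M₁ → (M₂/M₁)* = Hom_R(M₂/M₁, R) given by Ψ̄(m + M₁)(m' + M₁) = Ψ(m)(m') for m, m' ∈ M₂ is a well-defined R-module isomorphism; i.e. Ψ induces a perfect pairing on M₂/M₁. -/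

import Mathlib

open Module LinearMap

section Aux

variable {R : Type*} [CommRing R] {M : Type*} [AddCommGroup M] [Module R M]

/-- If `M ⧸ p` is projective, there is a retraction `M →ₗ p`. -/
private lemma exists_retraction' (p : Submodule R M) (hp : Module.Projective R (M ⧸ p)) :
    ∃ r : M →ₗ[R] p, ∀ x : p, r (x : M) = x := by
  obtain ⟨s, hs⟩ := Module.projective_lifting_property p.mkQ LinearMap.id p.mkQ_surjective
  have hs' : ∀ y, p.mkQ (s y) = y := fun y => LinearMap.congr_fun hs y
  refine ⟨(LinearMap.id - s.comp p.mkQ).codRestrict p (fun c => by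
    rw [← Submodule.Quotient.mk_eq_zero]
    show p.mkQ (LinearMap.id c - s (p.mkQ c)) = 0
    rw [map_sub, hs']
    simp), fun x => ?_⟩
  · apply Subtype.ext
    show (LinearMap.id (x : M) - s (p.mkQ (x : M))) = (x : M)
    have : p.mkQ (x : M) = 0 := (Submodule.Quotient.mk_eq_zero p).2 x.2
    rw [this, map_zero]
    simp

private lemma aux_bij {P Q : Type*} [Nontrivial R] [AddCommGroup P] [Module R P]
    [AddCommGroup Q] [Module R Q] [Module.Free R P] [Module.Finite R P]
    [Module.Free R Q] [Module.Finite R Q]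
    (h : Module.finrank R P = Module.finrank R Q)
    (f : P →ₗ[R] Q) (hf : Function.Surjective f) : Function.Injective f := by
  classical
  let bP := Module.Free.chooseBasis R P
  let bQ := Module.Free.chooseBasis R Q
  have hcard : Fintype.card (Module.Free.ChooseBasisIndex R Q)
      = Fintype.card (Module.Free.ChooseBasisIndex R P) := by
    rw [← Module.finrank_eq_card_chooseBasisIndex, ← Module.finrank_eq_card_chooseBasisIndex, h]
  let e := Fintype.equivOfCardEq hcard
  let g : Q ≃ₗ[R] P := bQ.equiv bP e
  have hinj : Function.Injective (g.toLinearMap.comp f) :=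
    OrzechProperty.injective_of_surjective_endomorphism _ (g.surjective.comp hf)
  intro a b hab
  exact hinj (by simp [LinearMap.comp_apply, hab])

private lemma finrank_dual_eq' (P : Type*) [Nontrivial R] [AddCommGroup P] [Module R P]
    [Module.Free R P] [Module.Finite R P] :
    Module.finrank R (Module.Dual R P) = Module.finrank R P := by
  classical
  let b := Module.Free.chooseBasis R P
  rw [Module.finrank_eq_card_basis b.dualBasis, Module.finrank_eq_card_basis b]

private lemma aux_surj [Nontrivial R]
    [Module.Free R M] [Module.Finite R M] (A : ℕ)
    (Ψ : M ≃ₗ[R] Module.Dual R M)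
    (M₁ M₂ : Submodule R M) (h12 : M₁ ≤ M₂)
    (hM₁free : Module.Free R M₁) (hM₁rank : Module.finrank R M₁ = A)
    (hQ₂free : Module.Free R (M ⧸ M₂)) (hQ₂rank : Module.finrank R (M ⧸ M₂) = A)
    (hQ₁free : Module.Free R (M ⧸ M₁))
    (hperp : ∀ m₁ ∈ M₁, ∀ m₂ ∈ M₂, Ψ m₁ m₂ = 0 ∧ Ψ m₂ m₁ = 0) :
    ∃ Ψbar : (M₂ ⧸ (M₁.comap M₂.subtype)) →ₗ[R]
        Module.Dual R (M₂ ⧸ (M₁.comap M₂.subtype)),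
      (∀ m m' : M₂,
        Ψbar (Submodule.Quotient.mk m) (Submodule.Quotient.mk m') = Ψ (m : M) (m' : M)) ∧
      Function.Surjective Ψbar := by
  classical
  haveI := hM₁free; haveI := hQ₂free; haveI := hQ₁free
  set M₁' : Submodule R M₂ := M₁.comap M₂.subtype with hM₁'def
  -- retractions
  obtain ⟨π₂, hπ₂⟩ := exists_retraction' M₂ inferInstance
  obtain ⟨ρ₁, hρ₁⟩ := exists_retraction' M₁ inferInstance
  haveI : Module.Finite R M₁ :=
    Module.Finite.of_surjective ρ₁ (fun y => ⟨(y : M), hρ₁ y⟩)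
  haveI : Module.Finite R M₂ :=
    Module.Finite.of_surjective π₂ (fun y => ⟨(y : M), hπ₂ y⟩)
  -- the bilinear form on M₂
  set b : M₂ →ₗ[R] M₂ →ₗ[R] R :=
    (Ψ.toLinearMap).compl₁₂ M₂.subtype M₂.subtype with hbdef
  have hb : ∀ m m' : M₂, b m m' = Ψ (m : M) (m' : M) := fun m m' => by
    rw [hbdef, LinearMap.compl₁₂_apply]
    rfl
  have h1 : M₁' ≤ LinearMap.ker b := by
    intro x hx
    rw [LinearMap.mem_ker]
    ext m'
    simpa [hb] using (hperp (x : M) hx (m' : M) m'.2).1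
  set q1 : (M₂ ⧸ M₁') →ₗ[R] (M₂ →ₗ[R] R) := M₁'.liftQ b h1 with hq1def
  have h2 : M₁' ≤ LinearMap.ker q1.flip := by
    intro x hx
    rw [LinearMap.mem_ker]
    apply LinearMap.ext
    intro z
    obtain ⟨m, rfl⟩ := Submodule.Quotient.mk_surjective M₁' z
    show q1 (Submodule.Quotient.mk m) x = 0
    rw [hq1def, Submodule.liftQ_apply]
    simpa [hb] using (hperp (x : M) hx (m : M) m.2).2
  set q2 : (M₂ ⧸ M₁') →ₗ[R] ((M₂ ⧸ M₁') →ₗ[R] R) := M₁'.liftQ q1.flip h2 with hq2def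
  refine ⟨q2.flip, ?_, ?_⟩
  · intro m m'
    show q2 (Submodule.Quotient.mk m') (Submodule.Quotient.mk m) = Ψ (m : M) (m' : M)
    rw [hq2def, Submodule.liftQ_apply]
    show q1 (Submodule.Quotient.mk m) m' = _
    rw [hq1def, Submodule.liftQ_apply]
    exact hb m m'
  · -- surjectivity
    have hform : ∀ m m' : M₂, q2.flip (Submodule.Quotient.mk m) (Submodule.Quotient.mk m')
        = Ψ (m : M) (m' : M) := by
      intro m m'
      show q2 (Submodule.Quotient.mk m') (Submodule.Quotient.mk m) = Ψ (m : M) (m' : M)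
      rw [hq2def, Submodule.liftQ_apply]
      show q1 (Submodule.Quotient.mk m) m' = _
      rw [hq1def, Submodule.liftQ_apply]
      exact hb m m'
    -- the map φ : M → Dual M₁
    set φ : M →ₗ[R] Module.Dual R M₁ := M₁.subtype.dualMap.comp Ψ.toLinearMap with hφdef
    have hφ_apply : ∀ (x : M) (y : M₁), φ x y = Ψ x (y : M) := fun x y => rfl
    have hφsurj : Function.Surjective φ := by
      intro g
      refine ⟨Ψ.symm (g.comp ρ₁), ?_⟩
      ext y
      rw [hφ_apply]
      have : (Ψ (Ψ.symm (g.comp ρ₁)) : Module.Dual R M) = g.comp ρ₁ := Ψ.apply_symm_apply _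
      rw [this]
      simp [hρ₁ y]
    have hφker : M₂ ≤ LinearMap.ker φ := by
      intro x hx
      rw [LinearMap.mem_ker]
      ext y
      rw [hφ_apply]
      exact (hperp (y : M) y.2 x hx).2
    set φbar : (M ⧸ M₂) →ₗ[R] Module.Dual R M₁ := M₂.liftQ φ hφker with hφbardef
    have hφbar_surj : Function.Surjective φbar := by
      intro g
      obtain ⟨x, hx⟩ := hφsurj g
      exact ⟨Submodule.Quotient.mk x, by rw [hφbardef, Submodule.liftQ_apply, hx]⟩
    have hφbar_inj : Function.Injective φbar := by
      refine aux_bij ?_ φbar hφbar_surj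
      rw [hQ₂rank, finrank_dual_eq', hM₁rank]
    intro f
    set F : M →ₗ[R] R := (f.comp M₁'.mkQ).comp π₂ with hFdef
    set m : M := Ψ.symm F with hmdef
    have hΨm : (Ψ m : Module.Dual R M) = F := Ψ.apply_symm_apply F
    have hmem : m ∈ M₂ := by
      have h0 : φbar (Submodule.Quotient.mk m) = 0 := by
        rw [hφbardef, Submodule.liftQ_apply]
        ext y
        rw [hφ_apply, hΨm]
        show f (M₁'.mkQ (π₂ (y : M))) = 0
        have hy2 : (y : M) ∈ M₂ := h12 y.2
        have : π₂ (y : M) = ⟨(y : M), hy2⟩ := hπ₂ ⟨(y : M), hy2⟩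
        rw [this]
        have hmem1 : (⟨(y : M), hy2⟩ : M₂) ∈ M₁' := y.2
        rw [Submodule.mkQ_apply, (Submodule.Quotient.mk_eq_zero M₁').2 hmem1, map_zero]
      have : (Submodule.Quotient.mk m : M ⧸ M₂) = 0 := hφbar_inj (by rw [h0, map_zero])
      exact (Submodule.Quotient.mk_eq_zero M₂).1 this
    refine ⟨Submodule.Quotient.mk (⟨m, hmem⟩ : M₂), ?_⟩
    apply LinearMap.ext
    intro z
    obtain ⟨m', rfl⟩ := Submodule.Quotient.mk_surjective M₁' z
    rw [hform]
    show Ψ m (m' : M) = f (Submodule.Quotient.mk m')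
    rw [hΨm]
    show f (M₁'.mkQ (π₂ ((m' : M)))) = f (Submodule.Quotient.mk m')
    rw [hπ₂ m']
    rfl

end Aux

theorem middle_quotient_perfect_pairing_of_perp
    (R : Type*) [CommRing R]
    (M : Type*) [AddCommGroup M] [Module R M]
    [Module.Free R M] [Module.Finite R M]
    (n A : ℕ) (hn : Module.finrank R M = n)
    (Ψ : M ≃ₗ[R] Module.Dual R M)
    (M₁ M₂ : Submodule R M) (h12 : M₁ ≤ M₂)
    (hM₁free : Module.Free R M₁) (hM₁rank : Module.finrank R M₁ = A)
    (hMidfree : Module.Free R (M₂ ⧸ (M₁.comap M₂.subtype)))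
    (hMidrank : Module.finrank R (M₂ ⧸ (M₁.comap M₂.subtype)) = n - 2 * A)
    (hQ₂free : Module.Free R (M ⧸ M₂)) (hQ₂rank : Module.finrank R (M ⧸ M₂) = A)
    (hQ₁free : Module.Free R (M ⧸ M₁))
    (hperp : ∀ m₁ ∈ M₁, ∀ m₂ ∈ M₂, Ψ m₁ m₂ = 0 ∧ Ψ m₂ m₁ = 0) :
    ∃ Ψbar : (M₂ ⧸ (M₁.comap M₂.subtype)) →ₗ[R]
        Module.Dual R (M₂ ⧸ (M₁.comap M₂.subtype)),
      (∀ m m' : M₂,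
        Ψbar (Submodule.Quotient.mk m) (Submodule.Quotient.mk m') = Ψ (m : M) (m' : M)) ∧
      Function.Bijective Ψbar := by
  classical
  rcases subsingleton_or_nontrivial R with hR | hR
  · haveI : Subsingleton M := Module.subsingleton R M
    haveI : Subsingleton (M₂ ⧸ (M₁.comap M₂.subtype)) :=
      (Submodule.Quotient.mk_surjective _).subsingleton
    exact ⟨0, fun m m' => Subsingleton.elim _ _,
      fun a b _ => Subsingleton.elim _ _, fun y => ⟨0, Subsingleton.elim _ _⟩⟩
  · obtain ⟨Ψbar, hform, hsurj⟩ :=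
      aux_surj A Ψ M₁ M₂ h12 hM₁free hM₁rank hQ₂free hQ₂rank hQ₁free hperp
    set Ψ' : M ≃ₗ[R] Module.Dual R M := (Module.evalEquiv R M).trans Ψ.dualMap with hΨ'def
    have hΨ' : ∀ x y : M, Ψ' x y = Ψ y x := by
      intro x y
      rw [hΨ'def]
      simp
    have hperp' : ∀ m₁ ∈ M₁, ∀ m₂ ∈ M₂, Ψ' m₁ m₂ = 0 ∧ Ψ' m₂ m₁ = 0 := by
      intro m₁ h₁ m₂ h₂
      refine ⟨?_, ?_⟩
      · rw [hΨ']; exact (hperp m₁ h₁ m₂ h₂).2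
      · rw [hΨ']; exact (hperp m₁ h₁ m₂ h₂).1
    obtain ⟨Ψbar', hform', hsurj'⟩ :=
      aux_surj A Ψ' M₁ M₂ h12 hM₁free hM₁rank hQ₂free hQ₂rank hQ₁free hperp'
    refine ⟨Ψbar, hform, ?_, hsurj⟩
    have hinj : ∀ z, Ψbar z = 0 → z = 0 := by
      intro z hz
      obtain ⟨v, rfl⟩ := Submodule.Quotient.mk_surjective _ z
      have hall : ∀ g : Module.Dual R (M₂ ⧸ (M₁.comap M₂.subtype)),
          g (Submodule.Quotient.mk v) = 0 := by
        intro g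
        obtain ⟨w, rfl⟩ := hsurj' g
        obtain ⟨u, rfl⟩ := Submodule.Quotient.mk_surjective _ w
        rw [hform', hΨ', ← hform v u, hz]
        rfl
      haveI := hMidfree
      let bW := Module.Free.chooseBasis R (M₂ ⧸ (M₁.comap M₂.subtype))
      exact (Basis.forall_coord_eq_zero_iff bW).1 fun i => hall (bW.coord i)
    exact (injective_iff_map_eq_zero Ψbar).2 hinj
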